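/- Let R = k[x,y] with maximal ideal 𝔪 = (x,y), let I ⊆ R be an 𝔪-primary ideal, f ∈ I with ord(f) = ord(I), and ℓ a linear form such that the initial forms f*, ℓ* form a regular sequence in the associated graded ring gr_𝔪(R). Then for every t ≠ 0 in k, (f) + (ℓ - t)(I : ℓ) = (f, ℓ - t) ∩ (I : ℓ). -/

import Mathlib

open MvPolynomial

namespace NestedHilbertStmt6

variable (k : Type*) [Field k] [IsAlgClosed k]

/-- `R = k[x,y]` with `x = X 0`, `y = X 1`. -/
abbrev R := MvPolynomial (Fin 2) k

/-- The maximal ideal `𝔪 = (x, y)` of `k[x,y]`. -/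
noncomputable def 𝔪 : Ideal (R k) := Ideal.span {X 0, X 1}

/-- Hartshorne's cleaving lemma (Lemma 3.3): let `I ⊆ k[x,y]` be an `𝔪`-primary ideal,
`f ∈ I` with `ord(f) = ord(I) = s`, and `ℓ` a linear form such that the initial forms
`f*, ℓ*` form a regular sequence in `gr_𝔪(R) ≅ k[x,y]` (here `f* = homogeneousComponent s f`
and `ℓ* = ℓ` since `ℓ` is homogeneous of degree 1).  Then for every `t ≠ 0` in `k`,
`(f) + (ℓ - t)·(I : ℓ) = (f, ℓ - t) ∩ (I : ℓ)`. -/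
theorem hartshorne_cleaving
    (I : Ideal (R k)) (hprim : I.IsPrimary) (hrad : I.radical = 𝔪 k)
    (f : R k) (hfI : f ∈ I) (s : ℕ)
    -- `ord(f) = ord(I) = s`: every element of `I` has order `≥ s` and `f` has order exactly `s`
    (hIs : I ≤ (𝔪 k) ^ s) (hfs : f ∉ (𝔪 k) ^ (s + 1))
    (ℓ : R k) (hℓ : ℓ.IsHomogeneous 1)
    -- `f*, ℓ*` is a regular sequence in the associated graded ring
    (hreg₁ : homogeneousComponent s f ≠ 0)
    (hreg₂ : ∀ g : R k, ℓ * g ∈ Ideal.span {homogeneousComponent s f} →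
      g ∈ Ideal.span {homogeneousComponent s f})
    (t : k) (ht : t ≠ 0) :
    Ideal.span {f} ⊔ Ideal.span {ℓ - C t} * Submodule.colon I (Ideal.span {ℓ})
      = (Ideal.span {f, ℓ - C t}) ⊓ Submodule.colon I (Ideal.span {ℓ}) := by
  -- First: `ℓ - C t ∉ 𝔪`, since its constant coefficient is `-t ≠ 0`.
  have hconst : constantCoeff (ℓ - C t) = -t := by
    have hc : constantCoeff ℓ = 0 := by
      have := hℓ.coeff_eq_zero (d := 0) (by simp)
      simpa [constantCoeff_eq] using this
    simp [hc]
  have hℓt : ℓ - C t ∉ 𝔪 k := by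
    intro hmem
    have hle : 𝔪 k ≤ RingHom.ker (constantCoeff (σ := Fin 2) (R := k)) := by
      rw [show 𝔪 k = Ideal.span {X 0, X 1} from rfl, Ideal.span_le]
      rintro p (rfl | rfl) <;> simp [RingHom.mem_ker]
    have := hle hmem
    rw [RingHom.mem_ker, hconst] at this
    exact ht (neg_eq_zero.mp this)
  apply le_antisymm
  · apply sup_le
    · rw [Ideal.span_le]
      rintro p rfl
      exact ⟨Ideal.subset_span (by simp),
        Ideal.mem_colon_span_singleton.mpr (by exact I.mul_mem_right ℓ hfI)⟩
    · refine le_inf ?_ ?_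
      · calc Ideal.span {ℓ - C t} * Submodule.colon I (Ideal.span {ℓ})
            ≤ Ideal.span {ℓ - C t} * ⊤ := by gcongr; exact le_top
          _ ≤ Ideal.span {f, ℓ - C t} := by
              rw [Ideal.mul_top, Ideal.span_le]
              rintro p rfl
              exact Ideal.subset_span (by simp)
      · exact Ideal.mul_le_right
  · intro g hg
    obtain ⟨hg1, hg2⟩ := Submodule.mem_inf.mp hg
    obtain ⟨a, b, hab⟩ := Ideal.mem_span_pair.mp hg1
    have hg2' : g * ℓ ∈ I := by
      have := Ideal.mem_colon_span_singleton.mp hg2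
      exact this
    -- `(ℓ * b) * (ℓ - C t) = g * ℓ - a * (f * ℓ) ∈ I`
    have hkey : (ℓ * b) * (ℓ - C t) ∈ I := by
      have : (ℓ * b) * (ℓ - C t) = g * ℓ - a * (f * ℓ) := by
        rw [← hab]; ring
      rw [this]
      exact I.sub_mem hg2' (I.mul_mem_left a (I.mul_mem_right ℓ hfI))
    have hb : ℓ * b ∈ I := by
      rcases (Ideal.isPrimary_iff.mp hprim).2 hkey with h | h
      · exact h
      · exact absurd (hrad ▸ h) hℓt
    have hbJ : b ∈ Submodule.colon I (Ideal.span {ℓ}) :=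
      Ideal.mem_colon_span_singleton.mpr (by rw [mul_comm]; exact hb)
    have : g = a * f + (ℓ - C t) * b := by rw [← hab]; ring
    rw [this]
    exact Submodule.add_mem_sup (Ideal.mul_mem_left _ a (Ideal.subset_span rfl))
      (Ideal.mul_mem_mul (Ideal.subset_span rfl) hbJ)

end NestedHilbertStmt6
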